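/- If NC_i(𝒞) = ∞, then no algorithm uniformly generates with noise level i for 𝒞. -/

import Mathlib

open Set Classical

/-- The set of languages in `𝒞` consistent with sample `S` at noise level `i`. -/
def Consistent {U : Type*} (𝒞 : Set (Set U)) (S : Set U) (i : ℕ) : Set (Set U) :=
  {L | L ∈ 𝒞 ∧ (S \ L).encard ≤ (i : ℕ∞)}

/-- The noisy closure of `S` at noise level `i`. -/
noncomputable def NoisyClosure {U : Type*} (𝒞 : Set (Set U)) (S : Set U) (i : ℕ) : Set U :=
  if (Consistent 𝒞 S i).Nonempty then ⋂ L ∈ Consistent 𝒞 S i, L else ∅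

/-- The noisy closure dimension of `𝒞` at noise level `i`, as an extended natural. -/
noncomputable def NC {U : Type*} (𝒞 : Set (Set U)) (i : ℕ) : ℕ∞ :=
  ⨆ S ∈ {S : Set U | S.Finite ∧ (Consistent 𝒞 S i).Nonempty ∧
      (NoisyClosure 𝒞 S i).Finite}, S.encard

/-- `x` is an enumeration of `K` with noise level at most `i`. -/
def IsNoisyEnum {U : Type*} (K : Set U) (i : ℕ) (x : ℕ → U) : Prop :=
  Function.Injective x ∧ K ⊆ Set.range x ∧ (Set.range x \ K).encard ≤ (i : ℕ∞)

/-- The set of strings revealed up to and including time `t`. -/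
def seenSet {U : Type*} (x : ℕ → U) (t : ℕ) : Set U := x '' Set.Iic t

/-- The prefix `x₀, …, x_t` of the enumeration, as a list fed to the generator. -/
def prefixList {U : Type*} (x : ℕ → U) (t : ℕ) : List U := (List.range (t + 1)).map x

/-- `G` uniformly generates with noise level `i` for `𝒞`. -/
def UniformGen {U : Type*} (𝒞 : Set (Set U)) (i : ℕ) (G : List U → U) : Prop :=
  ∃ t0 : ℕ, ∀ K ∈ 𝒞, ∀ x : ℕ → U, IsNoisyEnum K i x →
    ∀ t ≥ t0, G (prefixList x t) ∈ K \ seenSet x t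

/-- `G` non-uniformly generates with noise level `i` for `𝒞`. -/
def NonUniformGen {U : Type*} (𝒞 : Set (Set U)) (i : ℕ) (G : List U → U) : Prop :=
  ∀ K ∈ 𝒞, ∃ t0 : ℕ, ∀ x : ℕ → U, IsNoisyEnum K i x →
    ∀ t ≥ t0, G (prefixList x t) ∈ K \ seenSet x t

/-- `G` uniformly noise-dependently generates for `𝒞`. -/
def UniformNoiseDepGen {U : Type*} (𝒞 : Set (Set U)) (G : List U → U) : Prop :=
  ∀ n : ℕ, ∃ t0 : ℕ, ∀ K ∈ 𝒞, ∀ x : ℕ → U, IsNoisyEnum K n x →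
    ∀ t ≥ t0, G (prefixList x t) ∈ K \ seenSet x t

/-- `G` non-uniformly noise-dependently generates for `𝒞`. -/
def NonUniformNoiseDepGen {U : Type*} (𝒞 : Set (Set U)) (G : List U → U) : Prop :=
  ∀ n : ℕ, ∀ K ∈ 𝒞, ∃ t0 : ℕ, ∀ x : ℕ → U, IsNoisyEnum K n x →
    ∀ t ≥ t0, G (prefixList x t) ∈ K \ seenSet x t

/-- The infinite "column" `B c` in the universe `ℕ × ℕ`. -/
def column (c : ℕ) : Set (ℕ × ℕ) := {p | p.1 = c}

/-- The collection of all nonempty unions of columns. -/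
def columnCollection : Set (Set (ℕ × ℕ)) :=
  {L | ∃ x : Set ℕ, x.Nonempty ∧ L = ⋃ c ∈ x, column c}

lemma exists_injective_range_eq {U : Type*} [Countable U] {A : Set U} (hA : A.Infinite) :
    ∃ e : ℕ → U, Function.Injective e ∧ Set.range e = A := by
  have hc : A.Countable := Set.to_countable A
  have h1 : Countable A := hc.to_subtype
  have h2 : Infinite A := hA.to_subtype
  obtain ⟨d⟩ := nonempty_denumerable A
  refine ⟨fun n => ((Denumerable.eqv A).symm n : U), ?_, ?_⟩
  · intro a b h
    exact (Denumerable.eqv A).symm.injective (Subtype.coe_injective h)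
  · ext u
    constructor
    · rintro ⟨n, rfl⟩; exact ((Denumerable.eqv A).symm n).2
    · intro hu; exact ⟨Denumerable.eqv A ⟨u, hu⟩, by simp⟩

lemma extend_enum {U : Type*} [Countable U] (K : Set U) (hK : K.Infinite) (i t : ℕ) (x : ℕ → U)
    (hinj : Set.InjOn x (Set.Iio t)) (hni : ((x '' Set.Iio t) \ K).encard ≤ (i : ℕ∞)) :
    ∃ y : ℕ → U, IsNoisyEnum K i y ∧ ∀ j < t, y j = x j := by
  set T := x '' Set.Iio t with hT
  have hTfin : T.Finite := (Set.finite_Iio t).image x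
  have hinf : (K \ T).Infinite := hK.diff hTfin
  obtain ⟨e, einj, erng⟩ := exists_injective_range_eq hinf
  set y : ℕ → U := fun j => if j < t then x j else e (j - t) with hy
  have hyval1 : ∀ j, j < t → y j = x j := fun j hj => by simp [hy, hj]
  have hyval2 : ∀ j, ¬ j < t → y j = e (j - t) := fun j hj => by simp [hy, hj]
  have hrng : Set.range y = T ∪ (K \ T) := by
    ext u
    constructor
    · rintro ⟨n, rfl⟩
      by_cases h : n < t
      · left; rw [hyval1 n h]; exact ⟨n, h, rfl⟩
      · right; rw [hyval2 n h, ← erng]; exact ⟨n - t, rfl⟩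
    · rintro (⟨j, hj, rfl⟩ | hu)
      · exact ⟨j, hyval1 j hj⟩
      · rw [← erng] at hu; obtain ⟨n, rfl⟩ := hu
        refine ⟨n + t, ?_⟩
        rw [hyval2 (n + t) (by omega)]
        congr 1; omega
  refine ⟨y, ⟨?_, ?_, ?_⟩, hyval1⟩
  · intro a b hab
    by_cases ha : a < t <;> by_cases hb : b < t
    · exact hinj ha hb (by rwa [hyval1 a ha, hyval1 b hb] at hab)
    · exfalso
      rw [hyval1 a ha, hyval2 b hb] at hab
      have h1 : x a ∈ T := ⟨a, ha, rfl⟩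
      have h2 : e (b - t) ∈ K \ T := erng ▸ ⟨b - t, rfl⟩
      rw [hab] at h1
      exact h2.2 h1
    · exfalso
      rw [hyval2 a ha, hyval1 b hb] at hab
      have h1 : x b ∈ T := ⟨b, hb, rfl⟩
      have h2 : e (a - t) ∈ K \ T := erng ▸ ⟨a - t, rfl⟩
      rw [← hab] at h1
      exact h2.2 h1
    · rw [hyval2 a ha, hyval2 b hb] at hab
      have := einj hab
      omega
  · intro k hk
    rw [hrng]
    by_cases h : k ∈ T
    · exact Or.inl h
    · exact Or.inr ⟨hk, h⟩
  · refine le_trans (Set.encard_mono ?_) hni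
    rintro u ⟨hu1, hu2⟩
    rw [hrng] at hu1
    rcases hu1 with h | h
    · exact ⟨h, hu2⟩
    · exact absurd h.1 hu2

noncomputable def genSeq {U : Type*} (G : List U → U) (s : List U) : ℕ → U
  | t =>
    if h : t < s.length then s.get ⟨t, h⟩
    else G ((List.range t).attach.map fun j => genSeq G s j.1)
  termination_by t => t
  decreasing_by exact List.mem_range.mp j.2

lemma genSeq_lt {U : Type*} (G : List U → U) (s : List U) {t : ℕ} (h : t < s.length) :
    genSeq G s t = s.get ⟨t, h⟩ := by
  rw [genSeq, dif_pos h]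

lemma genSeq_ge {U : Type*} (G : List U → U) (s : List U) {t : ℕ} (h : ¬ t < s.length) :
    genSeq G s t = G ((List.range t).map (genSeq G s)) := by
  rw [genSeq, dif_neg h]
  congr 1
  simp [List.attach_map_val]

theorem stmt9 {U : Type*} [Countable U] (𝒞 : Set (Set U))
    (h𝒞 : ∀ L ∈ 𝒞, L.Infinite) (i : ℕ) (hNC : NC 𝒞 i = ⊤) :
    ¬ ∃ G : List U → U, UniformGen 𝒞 i G := by
  rintro ⟨G, t0, hGen⟩
  have h1 : (t0 : ℕ∞) < NC 𝒞 i := by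
    rw [hNC]; exact lt_top_iff_ne_top.mpr (by simp)
  rw [NC] at h1
  simp only [lt_iSup_iff, mem_setOf_eq] at h1
  obtain ⟨S, ⟨hSfin, hCne, hClfin⟩, hScard⟩ := h1
  set s : List U := hSfin.toFinset.toList with hs
  set m := s.length with hmdef
  have hsmem : ∀ a, a ∈ s ↔ a ∈ S := by intro a; simp [hs]
  have hmcard : (m : ℕ∞) = S.encard := by
    rw [hmdef, hs, Finset.length_toList, hSfin.encard_eq_coe_toFinset_card]
  have hm : t0 < m := by
    have h2 : (t0 : ℕ∞) < (m : ℕ∞) := hmcard ▸ hScard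
    exact_mod_cast h2
  set x := genSeq G s with hx
  have hxmemS : ∀ j < m, x j ∈ S := by
    intro j hj
    rw [hx, genSeq_lt G s hj]
    exact (hsmem _).mp (s.get_mem _)
  have hclosure : NoisyClosure 𝒞 S i = ⋂ L ∈ Consistent 𝒞 S i, L := by
    rw [NoisyClosure, if_pos hCne]
  have main : ∀ t, Set.InjOn x (Set.Iio t) ∧
      ∀ j, m ≤ j → j < t → x j ∈ NoisyClosure 𝒞 S i := by
    intro t
    induction t with
    | zero => exact ⟨by simp [Set.InjOn], by omega⟩
    | succ t ih =>
      obtain ⟨ihinj, ihcl⟩ := ih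
      have key : m ≤ t → (x t ∉ x '' Set.Iio t) ∧ x t ∈ NoisyClosure 𝒞 S i := by
        intro hmt
        have hKmem : ∀ K ∈ Consistent 𝒞 S i, x t ∈ K \ (x '' Set.Iio t) := by
          intro K hK
          have hKC : K ∈ 𝒞 := hK.1
          have hKinf := h𝒞 K hKC
          have hsub : (x '' Set.Iio t) \ K ⊆ S \ K := by
            rintro u ⟨⟨j, hj, rfl⟩, hu⟩
            simp only [Set.mem_Iio] at hj
            refine ⟨?_, hu⟩
            rcases lt_or_ge j m with h | h
            · exact hxmemS j h
            · exfalso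
              apply hu
              have hcl := ihcl j h hj
              rw [hclosure] at hcl
              exact Set.mem_iInter₂.mp hcl K hK
          have hni : ((x '' Set.Iio t) \ K).encard ≤ (i : ℕ∞) :=
            le_trans (Set.encard_mono hsub) hK.2
          obtain ⟨y, hyenum, hagree⟩ := extend_enum K hKinf i t x ihinj hni
          have ht0 : t - 1 ≥ t0 := by omega
          have happ := hGen K hKC y hyenum (t - 1) ht0
          have hpre : prefixList y (t - 1) = prefixList x (t - 1) := by
            unfold prefixList
            apply List.map_congr_left
            intro j hj
            rw [List.mem_range] at hj
            exact hagree j (by omega)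
          have hxt : x t = G (prefixList x (t - 1)) := by
            have ht1 : 1 ≤ t := by omega
            rw [hx, genSeq_ge G s (by omega)]
            unfold prefixList
            rw [Nat.sub_add_cancel ht1]
          have hseen : seenSet y (t - 1) = x '' Set.Iio t := by
            unfold seenSet
            have hIic : Set.Iic (t - 1) = Set.Iio t := by
              ext j; simp only [Set.mem_Iic, Set.mem_Iio]; omega
            rw [hIic]
            apply Set.image_congr
            intro j hj
            exact hagree j hj
          rw [hpre, hseen] at happ
          rw [hxt]
          exact happ
        obtain ⟨K0, hK0⟩ := hCne
        refine ⟨(hKmem K0 hK0).2, ?_⟩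
        rw [hclosure]
        exact Set.mem_iInter₂.mpr fun K hK => (hKmem K hK).1
      have hne : ∀ b < t, x t ≠ x b := by
        intro b hb hbeq
        rcases lt_or_ge t m with h | h
        · have hbm : b < s.length := by omega
          rw [hx, genSeq_lt G s h, genSeq_lt G s hbm] at hbeq
          have hnd : s.Nodup := Finset.nodup_toList _
          have h2 := (List.Nodup.get_inj_iff hnd).mp hbeq
          simp only [Fin.mk.injEq] at h2
          omega
        · exact (key h).1 ⟨b, hb, hbeq.symm⟩
      constructor
      · intro a ha b hb hab
        simp only [Set.mem_Iio, Nat.lt_succ_iff] at ha hb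
        rcases eq_or_lt_of_le ha with rfl | ha' <;> rcases eq_or_lt_of_le hb with rfl | hb'
        · rfl
        · exact absurd (hne b hb' hab) (by simp)
        · exact absurd (hne a ha' hab.symm) (by simp)
        · exact ihinj ha' hb' hab
      · intro j hj1 hj2
        rcases Nat.lt_succ_iff_lt_or_eq.mp hj2 with h | rfl
        · exact ihcl j hj1 h
        · exact (key hj1).2
  have hinj : Function.Injective fun n => x (m + n) := by
    intro a b hab
    have hab' : x (m + a) = x (m + b) := hab
    have h := (main (m + a + b + 1)).1
    have ha : m + a ∈ Set.Iio (m + a + b + 1) := by simp only [Set.mem_Iio]; omega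
    have hb : m + b ∈ Set.Iio (m + a + b + 1) := by simp only [Set.mem_Iio]; omega
    have := h ha hb hab'
    omega
  have hmem : ∀ n, x (m + n) ∈ NoisyClosure 𝒞 S i := fun n =>
    (main (m + n + 1)).2 (m + n) (by omega) (by omega)
  exact (Set.infinite_of_injective_forall_mem hinj hmem) hClfin
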